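/- Let 0 < β < 2 with β ≠ 1, and let v : [0,1] → ℝ be continuous on [0,1] and continuously differentiable on (0,1] with v(1) = 0, with x ↦ x^β v′(x) differentiable on (0,1), with (x^β v′)′·v integrable on (0,1), with ∫_0^1 x^β (v′(x))² dx < ∞, and suppose lim_{x→0+} x^β v′(x) v(x) = 0. Then (A v, v)_{L²(0,1)} = −∫_0^1 (x^β v′(x))′ v(x) dx ≥ (2−β)·∫_0^1 v(x)² dx; i.e. the operator A is positive definite with constant γ = 2−β. -/

import Mathlib

open MeasureTheory intervalIntegral Filter

/-- **Positive definiteness of the degenerate operator `A v = -(x^β v')'`.**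
Let `0 < β < 2`, `β ≠ 1`, let `v` be continuous on `[0,1]`, continuously differentiable
on `(0,1]` with derivative `v'`, `v(1) = 0`, let `x^β v'` be differentiable on `(0,1)`
with derivative `w'`, let `(x^β v')'·v` be integrable on `(0,1)`, let
`∫_0^1 x^β (v')² dx < ∞`, and suppose `x^β v'(x) v(x) → 0` as `x → 0+`. Then
`(A v, v)_{L²} = -∫_0^1 (x^β v')' v dx ≥ (2-β) ∫_0^1 v² dx`. -/
theorem degenerate_operator_positive_definite (β : ℝ) (hβ0 : 0 < β) (hβ2 : β < 2)
    (hβ1 : β ≠ 1) (v v' w' : ℝ → ℝ)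
    (hv : ContinuousOn v (Set.Icc 0 1))
    (hv' : ∀ x ∈ Set.Ioc (0 : ℝ) 1, HasDerivWithinAt v (v' x) (Set.Ioc 0 1) x)
    (hv'c : ContinuousOn v' (Set.Ioc 0 1))
    (hv1 : v 1 = 0)
    (hw' : ∀ x ∈ Set.Ioo (0 : ℝ) 1, HasDerivAt (fun y => y ^ β * v' y) (w' x) x)
    (hint : IntervalIntegrable (fun x => w' x * v x) volume 0 1)
    (henergy : IntervalIntegrable (fun x => x ^ β * v' x ^ 2) volume 0 1)
    (hlim0 : Tendsto (fun x => x ^ β * v' x * v x) (nhdsWithin 0 (Set.Ioi 0)) (nhds 0)) :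
    (2 - β) * (∫ x in (0 : ℝ)..1, v x ^ 2) ≤ -(∫ x in (0 : ℝ)..1, w' x * v x) := by
  set E := ∫ t in (0:ℝ)..1, t ^ β * v' t ^ 2 with hEdef
  -- Step 1 : integration by parts, `-∫ w' v = E`
  have hderivAt : ∀ x ∈ Set.Ioo (0:ℝ) 1, HasDerivAt v (v' x) x := fun x hx =>
    (hv' x ⟨hx.1, hx.2.le⟩).hasDerivAt (Ioc_mem_nhds hx.1 hx.2)
  have hstep1 : -(∫ x in (0:ℝ)..1, w' x * v x) = E := by
    have key : ∫ x in (0:ℝ)..1, (w' x * v x + x ^ β * v' x ^ 2) = 0 - 0 := by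
      apply integral_eq_sub_of_hasDerivAt_of_tendsto (f := fun x => x ^ β * v' x * v x) one_pos
      · intro x hx
        have h := (hw' x hx).mul (hderivAt x hx)
        have he : w' x * v x + x ^ β * v' x ^ 2 = w' x * v x + x ^ β * v' x * v' x := by ring
        rw [he]; exact h
      · exact hint.add henergy
      · exact hlim0
      · have hc : ContinuousWithinAt (fun x : ℝ => x ^ β * v' x * v x) (Set.Ioc 0 1) 1 := by
          apply ContinuousWithinAt.mul
          apply ContinuousWithinAt.mul
          · exact (Real.continuousAt_rpow_const 1 β (Or.inl one_ne_zero)).continuousWithinAt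
          · exact hv'c 1 (by norm_num)
          · exact (hv.mono Set.Ioc_subset_Icc_self) 1 (by norm_num)
        have ht := hc.tendsto
        rw [show ((1:ℝ) ^ β * v' 1 * v 1) = 0 by rw [hv1]; ring] at ht
        refine ht.mono_left ?_
        rw [← nhdsWithin_Ioo_eq_nhdsLT (show (0:ℝ) < 1 by norm_num)]
        exact nhdsWithin_mono _ Set.Ioo_subset_Ioc_self
    rw [integral_add hint henergy] at key
    rw [hEdef]; linarith
  -- Step 2 : pointwise Hardy-type bound
  have hbound : ∀ x ∈ Set.Ioc (0:ℝ) 1,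
      v x ^ 2 ≤ ((1 - x ^ (1-β)) / (1-β)) * E := by
    intro x hx
    have hx0 : 0 < x := hx.1
    have hx1 : x ≤ 1 := hx.2
    have hIccsub : Set.Icc x 1 ⊆ Set.Ioc 0 1 := fun t ht => ⟨lt_of_lt_of_le hx0 ht.1, ht.2⟩
    have huIcc : Set.uIcc x 1 = Set.Icc x 1 := Set.uIcc_of_le hx1
    have hcv' : ContinuousOn v' (Set.Icc x 1) := hv'c.mono hIccsub
    have hrpow : ∀ r : ℝ, ContinuousOn (fun t : ℝ => t ^ r) (Set.Icc x 1) := fun r =>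
      fun t ht => (Real.continuousAt_rpow_const t r
        (Or.inl (ne_of_gt (lt_of_lt_of_le hx0 ht.1)))).continuousWithinAt
    have hE1 : IntervalIntegrable (fun t => t ^ β * v' t ^ 2) volume x 1 :=
      henergy.mono_set (by
        rw [huIcc, Set.uIcc_of_le (zero_le_one)]; exact Set.Icc_subset_Icc hx0.le le_rfl)
    have hE0' : IntervalIntegrable (fun t => t ^ β * v' t ^ 2) volume 0 x :=
      henergy.mono_set (by
        rw [Set.uIcc_of_le hx0.le, Set.uIcc_of_le (zero_le_one)]
        exact Set.Icc_subset_Icc le_rfl hx1)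
    set C := ∫ t in x..1, t ^ β * v' t ^ 2 with hC
    have hCE : C ≤ E := by
      have hsplit := integral_add_adjacent_intervals hE0' hE1
      have h0x : 0 ≤ ∫ t in (0:ℝ)..x, t ^ β * v' t ^ 2 :=
        integral_nonneg hx0.le fun t ht => mul_nonneg (Real.rpow_nonneg ht.1 β) (sq_nonneg _)
      rw [hEdef, ← hsplit]; linarith
    have hvx : ∫ t in x..1, v' t = - v x := by
      have := integral_eq_sub_of_hasDeriv_right_of_le hx1
        (hv.mono (Set.Icc_subset_Icc hx0.le le_rfl))
        (fun t ht => ((hv' t ⟨lt_trans hx0 ht.1, ht.2.le⟩).hasDerivAt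
          (Ioc_mem_nhds (lt_trans hx0 ht.1) ht.2)).hasDerivWithinAt)
        ((hcv'.mono (by rw [← huIcc])).intervalIntegrable)
      rw [this, hv1]; ring
    set A := ∫ t in x..1, t ^ (-β) with hA
    set B := ∫ t in x..1, v' t with hB
    have hcs : B ^ 2 ≤ A * C := by
      rcases eq_or_lt_of_le hx1 with h1 | hlt
      · simp [hB, hA, hC, ← h1]
      have hApos : 0 < A := by
        apply intervalIntegral_pos_of_pos_on
        · exact ((hrpow (-β)).mono (by rw [← huIcc])).intervalIntegrable
        · intro t ht; exact Real.rpow_pos_of_pos (lt_trans hx0 ht.1) _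
        · exact hlt
      have hq : ∀ c : ℝ, 0 ≤ c ^ 2 * A - 2 * c * B + C := by
        intro c
        have hi1 : IntervalIntegrable (fun t => t ^ (-β)) volume x 1 :=
          ((hrpow (-β)).mono (by rw [← huIcc])).intervalIntegrable
        have hi2 : IntervalIntegrable v' volume x 1 :=
          (hcv'.mono (by rw [← huIcc])).intervalIntegrable
        have heq : ∫ t in x..1, (c ^ 2 * t ^ (-β) - 2 * c * v' t + t ^ β * v' t ^ 2)
            = c ^ 2 * A - 2 * c * B + C := by
          rw [integral_add ((hi1.const_mul _).sub (hi2.const_mul _)) hE1,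
            integral_sub (hi1.const_mul _) (hi2.const_mul _),
            intervalIntegral.integral_const_mul, intervalIntegral.integral_const_mul]
        have hnn : 0 ≤ ∫ t in x..1, (c ^ 2 * t ^ (-β) - 2 * c * v' t + t ^ β * v' t ^ 2) := by
          apply integral_nonneg hx1
          intro t ht
          have ht0 : 0 < t := lt_of_lt_of_le hx0 ht.1
          have e1 : t ^ (-(β/2)) * t ^ (-(β/2)) = t ^ (-β) := by
            rw [← Real.rpow_add ht0]; ring_nf
          have e2 : t ^ (β/2) * t ^ (β/2) = t ^ β := by
            rw [← Real.rpow_add ht0]; ring_nf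
          have e3 : t ^ (-(β/2)) * t ^ (β/2) = 1 := by
            rw [← Real.rpow_add ht0]; norm_num
          have key : c ^ 2 * t ^ (-β) - 2 * c * v' t + t ^ β * v' t ^ 2
              = (c * t ^ (-(β/2)) - t ^ (β/2) * v' t) ^ 2 := by
            linear_combination (-(c^2)) * e1 + (2*c*v' t) * e3 + (-(v' t ^ 2)) * e2
          rw [key]; positivity
        rw [heq] at hnn; exact hnn
      have h2 := hq (B / A)
      have h3 : 0 ≤ A * ((B/A) ^ 2 * A - 2 * (B/A) * B + C) := mul_nonneg hApos.le h2
      have h4 : A * ((B/A) ^ 2 * A - 2 * (B/A) * B + C) = A * C - B ^ 2 := by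
        field_simp; ring
      linarith [h4 ▸ h3]
    have hAval : A = (1 - x ^ (1-β)) / (1-β) := by
      rw [hA, integral_rpow (Or.inr ⟨by
        intro h; apply hβ1; linarith [neg_eq_iff_eq_neg.mp h], by
        rw [Set.uIcc_of_le hx1]; intro h; exact absurd h.1 (not_le.mpr hx0)⟩)]
      rw [Real.one_rpow]
      ring_nf
    have hA0 : 0 ≤ A := by
      apply integral_nonneg hx1
      intro t ht; exact Real.rpow_nonneg (le_trans hx0.le ht.1) _
    calc v x ^ 2 = B ^ 2 := by rw [hvx]; ring
      _ ≤ A * C := hcs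
      _ ≤ A * E := mul_le_mul_of_nonneg_left hCE hA0
      _ = ((1 - x ^ (1-β)) / (1-β)) * E := by rw [hAval]
  -- Step 3 : integrate the bound
  have hvsq_int : IntervalIntegrable (fun x => v x ^ 2) volume 0 1 :=
    ((hv.pow 2).mono (by rw [Set.uIcc_of_le (zero_le_one)])).intervalIntegrable
  have hrpow_int : IntervalIntegrable (fun x : ℝ => x ^ (1-β)) volume 0 1 :=
    intervalIntegrable_rpow' (by linarith)
  have hg_int : IntervalIntegrable
      (fun x : ℝ => ((1 - x ^ (1-β)) / (1-β)) * E) volume 0 1 :=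
    ((intervalIntegrable_const.sub hrpow_int).div_const _).mul_const _
  have hmono : (∫ x in (0:ℝ)..1, v x ^ 2)
      ≤ ∫ x in (0:ℝ)..1, ((1 - x ^ (1-β)) / (1-β)) * E := by
    apply integral_mono_ae_restrict zero_le_one hvsq_int hg_int
    rw [← Measure.restrict_congr_set Ioc_ae_eq_Icc]
    filter_upwards [ae_restrict_mem measurableSet_Ioc] with x hx using hbound x hx
  have hgval : (∫ x in (0:ℝ)..1, ((1 - x ^ (1-β)) / (1-β)) * E) = E / (2-β) := by
    have h21 : (1:ℝ) - β + 1 = 2 - β := by ring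
    have hr : ∫ x in (0:ℝ)..1, x ^ (1-β) = 1 / (2-β) := by
      rw [integral_rpow (Or.inl (by linarith))]
      rw [h21, Real.one_rpow, Real.zero_rpow (by intro h; linarith [h] : (2:ℝ) - β ≠ 0)]
      ring
    calc (∫ x in (0:ℝ)..1, ((1 - x ^ (1-β)) / (1-β)) * E)
        = (∫ x in (0:ℝ)..1, ((1 - x ^ (1-β)) / (1-β))) * E := by
          rw [intervalIntegral.integral_mul_const]
      _ = ((∫ x in (0:ℝ)..1, (1 - x ^ (1-β))) / (1-β)) * E := by
          rw [intervalIntegral.integral_div]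
      _ = ((1 - 1/(2-β)) / (1-β)) * E := by
          rw [integral_sub intervalIntegrable_const hrpow_int, hr, intervalIntegral.integral_const]
          norm_num
      _ = E / (2-β) := by
          have hβ1' : (1:ℝ) - β ≠ 0 := fun h => hβ1 (by linarith)
          have hβ2' : (2:ℝ) - β ≠ 0 := by intro h; linarith
          field_simp
          ring
  rw [hstep1]
  calc (2 - β) * (∫ x in (0:ℝ)..1, v x ^ 2)
      ≤ (2 - β) * (E / (2-β)) := by
        apply mul_le_mul_of_nonneg_left _ (by linarith)
        rw [← hgval]; exact hmono
    _ = E := by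
        have : (2:ℝ) - β ≠ 0 := by intro h; linarith
        field_simp
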